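/- The Pontryagin dual of ℚ/ℤ is isomorphic as a topological group to Ẑ = ∏_p ℤ_p, via the map sending z ∈ Ẑ to the character [m/n] ↦ exp(2πi · z(n) · m/n). -/

import Mathlib

open scoped Real

instance (n : ℕ) : TopologicalSpace (ZMod n) := ⊥

instance (n : ℕ) : DiscreteTopology (ZMod n) := ⟨rfl⟩

/-- The profinite completion `Ẑ` of `ℤ`, as the inverse limit of the `ℤ/nℤ`. -/
def ZHat : Subring (Π n : ℕ+, ZMod n) where
  carrier := {f | ∀ (m n : ℕ+) (h : (m : ℕ) ∣ (n : ℕ)),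
    ZMod.castHom h (ZMod m) (f n) = f m}
  zero_mem' := by intro m n h; exact map_zero (ZMod.castHom h (ZMod (m : ℕ)))
  one_mem' := by intro m n h; exact map_one (ZMod.castHom h (ZMod (m : ℕ)))
  add_mem' := by intro a b ha hb m n h; simp only [Pi.add_apply, map_add, ha m n h, hb m n h]
  neg_mem' := by intro a ha m n h; simp only [Pi.neg_apply, map_neg, ha m n h]
  mul_mem' := by intro a b ha hb m n h; simp only [Pi.mul_apply, map_mul, ha m n h, hb m n h]

/-- The discrete group `ℚ/ℤ`. -/
def QModZ : Type := ℚ ⧸ (Int.castAddHom ℚ).range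

instance : AddCommGroup QModZ := inferInstanceAs (AddCommGroup (ℚ ⧸ (Int.castAddHom ℚ).range))

/-- The Pontryagin dual of `ℚ/ℤ`: since `ℚ/ℤ` is discrete, it consists of all
group homomorphisms `ℚ/ℤ → 𝕋`, with the topology of pointwise convergence. -/
noncomputable instance : TopologicalSpace (QModZ →+ Additive Circle) :=
  TopologicalSpace.induced (fun φ => (φ : QModZ → Additive Circle)) inferInstance

lemma exp_eq_of_sub_int {x y : ℝ} (k : ℤ) (h : x - y = k) :
    Circle.exp (2 * π * x) = Circle.exp (2 * π * y) :=
  Circle.exp_eq_exp.2 ⟨k, by linear_combination (2*π) * h⟩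

lemma exp_npow (t : ℝ) (k : ℕ) : Circle.exp t ^ k = Circle.exp (k * t) := by
  induction k with
  | zero => simp
  | succ n ih => rw [pow_succ, ih, ← Circle.exp_add]; congr 1; push_cast; ring

lemma exp_zpow (t : ℝ) (k : ℤ) : Circle.exp t ^ k = Circle.exp (k * t) := by
  cases k with
  | ofNat n => rw [Int.ofNat_eq_coe, zpow_natCast, exp_npow]; norm_num
  | negSucc n => rw [zpow_negSucc, exp_npow, ← Circle.exp_neg]; congr 1; push_cast; ring

lemma den_mul_eq_num (q : ℚ) : (q.den : ℝ) * (q : ℝ) = (q.num : ℝ) := by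
  have h0 : (q.den : ℚ) ≠ 0 := by exact_mod_cast q.den_pos.ne'
  have h : (q.num : ℚ) = q * q.den := (div_eq_iff h0).1 (Rat.num_div_den q)
  have h2 : (q.den : ℚ) * q = (q.num : ℚ) := by rw [mul_comm]; exact h.symm
  exact_mod_cast congrArg (fun x : ℚ => (x : ℝ)) h2

/-- the denominator of `q` as an element of `ℕ+`. -/
def qden (q : ℚ) : ℕ+ := ⟨q.den, q.den_pos⟩

lemma zhat_compat (z : ZHat) {m n : ℕ+} (h : (m : ℕ) ∣ (n : ℕ)) :
    ∃ k : ℤ, ((z.1 n).val : ℤ) = ((z.1 m).val : ℤ) + k * (m : ℕ) := by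
  have h1 : ZMod.castHom h (ZMod (m : ℕ)) (z.1 n) = z.1 m := z.2 m n h
  have h2 : (((z.1 n).val : ℕ) : ZMod (m : ℕ)) = (((z.1 m).val : ℕ) : ZMod (m : ℕ)) := by
    rw [ZMod.natCast_val, ZMod.natCast_val, ZMod.cast_id]
    rw [ZMod.castHom_apply] at h1
    exact h1
  have h3 : (z.1 n).val ≡ (z.1 m).val [MOD (m : ℕ)] :=
    (ZMod.natCast_eq_natCast_iff _ _ _).1 h2
  obtain ⟨c, hc⟩ := h3.dvd
  exact ⟨-c, by push_cast at hc ⊢; linarith⟩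

noncomputable def phi (z : ZHat) (q : ℚ) : Circle :=
  Circle.exp (2 * π * (((z.1 (qden q)).val : ℝ) * (q : ℝ)))

lemma phi_eq (z : ZHat) (q : ℚ) {n : ℕ+} (h : q.den ∣ (n : ℕ)) :
    Circle.exp (2 * π * (((z.1 n).val : ℝ) * (q : ℝ))) = phi z q := by
  obtain ⟨k, hk⟩ := zhat_compat z (m := qden q) (n := n) h
  refine exp_eq_of_sub_int (k * q.num) ?_
  have hd : ((qden q : ℕ) : ℝ) * (q : ℝ) = (q.num : ℝ) := den_mul_eq_num q
  have hk' : ((z.1 n).val : ℝ) = ((z.1 (qden q)).val : ℝ) + (k : ℝ) * ((qden q : ℕ) : ℝ) := by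
    exact_mod_cast hk
  push_cast
  linear_combination (q : ℝ) * hk' + (k : ℝ) * hd

lemma phi_div (z : ZHat) (m : ℤ) (n : ℕ+) :
    phi z ((m : ℚ) / (n : ℚ)) =
      Circle.exp (2 * π * (((z.1 n).val : ℝ) * ((m : ℝ) / (n : ℝ)))) := by
  have hden : ((m : ℚ) / (n : ℚ)).den ∣ (n : ℕ) := by
    have h := Rat.den_dvd m ((n : ℕ) : ℤ)
    rw [Rat.divInt_eq_div] at h
    exact_mod_cast h
  rw [← phi_eq z ((m : ℚ) / (n : ℚ)) hden]
  congr 1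
  push_cast
  ring

noncomputable def psi (z : ZHat) : ℚ →+ Additive Circle where
  toFun q := Additive.ofMul (phi z q)
  map_zero' := by
    simp only [phi]
    norm_num
  map_add' q₁ q₂ := by
    show Additive.ofMul (phi z (q₁ + q₂))
      = Additive.ofMul (phi z q₁) + Additive.ofMul (phi z q₂)
    rw [← ofMul_mul]
    congr 1
    have h12 : (q₁ + q₂).den ∣ ((qden q₁ * qden q₂ : ℕ+) : ℕ) := by
      show (q₁ + q₂).den ∣ q₁.den * q₂.den
      exact Rat.add_den_dvd q₁ q₂
    have h1 : q₁.den ∣ ((qden q₁ * qden q₂ : ℕ+) : ℕ) := by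
      show q₁.den ∣ q₁.den * q₂.den
      exact dvd_mul_right _ _
    have h2 : q₂.den ∣ ((qden q₁ * qden q₂ : ℕ+) : ℕ) := by
      show q₂.den ∣ q₁.den * q₂.den
      exact dvd_mul_left _ _
    rw [← phi_eq z (q₁ + q₂) h12, ← phi_eq z q₁ h1, ← phi_eq z q₂ h2, ← Circle.exp_add]
    congr 1
    push_cast
    ring

lemma psi_int (z : ZHat) (k : ℤ) : psi z (k : ℚ) = 0 := by
  show Additive.ofMul (phi z (k : ℚ)) = 0
  have hden : ((k : ℚ)).den ∣ ((1 : ℕ+) : ℕ) := by simp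
  rw [← phi_eq z (k : ℚ) hden]
  have hv : (z.1 1).val = 0 := Nat.lt_one_iff.1 ((z.1 1).val_lt)
  rw [hv]
  simp

noncomputable def Psi (z : ZHat) : QModZ →+ Additive Circle :=
  QuotientAddGroup.lift _ (psi z) (by
    rintro x ⟨k, rfl⟩
    simpa using psi_int z k)

lemma Psi_mk (z : ZHat) (q : ℚ) :
    Psi z (QuotientAddGroup.mk q) = Additive.ofMul (phi z q) := rfl

lemma val_add_exp (d : ℕ+) (A B : ZMod (d : ℕ)) (q : ℚ)
    (hd : ((d : ℕ) : ℝ) * (q : ℝ) = (q.num : ℝ)) :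
    Circle.exp (2 * π * (((A + B).val : ℝ) * (q : ℝ)))
      = Circle.exp (2 * π * ((A.val : ℝ) * (q : ℝ)) + 2 * π * ((B.val : ℝ) * (q : ℝ))) := by
  have hrw : 2 * π * ((A.val : ℝ) * (q : ℝ)) + 2 * π * ((B.val : ℝ) * (q : ℝ))
      = 2 * π * (((A.val : ℝ) + (B.val : ℝ)) * (q : ℝ)) := by ring
  rw [hrw]
  set t := (A.val + B.val) / (d : ℕ) with ht
  have hmod : (A + B).val + (d : ℕ) * t = A.val + B.val := by
    rw [ZMod.val_add, ht]
    exact Nat.mod_add_div _ _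
  refine exp_eq_of_sub_int (-((t : ℤ) * q.num)) ?_
  have hs : (((A + B).val : ℝ)) = (A.val : ℝ) + (B.val : ℝ) - ((d : ℕ) : ℝ) * (t : ℝ) := by
    have := congrArg (fun x : ℕ => (x : ℝ)) hmod
    push_cast at this
    linarith
  push_cast
  linear_combination (q : ℝ) * hs - (t : ℝ) * hd

lemma Psi_zero : Psi 0 = 0 := by
  refine AddMonoidHom.ext (fun x => ?_)
  refine QuotientAddGroup.induction_on x (fun q => ?_)
  rw [Psi_mk]
  have : ((0 : ZHat).1 (qden q)) = 0 := rfl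
  simp [phi, this]
  rfl

lemma Psi_add (z w : ZHat) : Psi (z + w) = Psi z + Psi w := by
  refine AddMonoidHom.ext (fun x => ?_)
  refine QuotientAddGroup.induction_on x (fun q => ?_)
  show Additive.ofMul (phi (z + w) q) = Additive.ofMul (phi z q) + Additive.ofMul (phi w q)
  rw [← ofMul_mul]
  congr 1
  have hab : ((z + w : ZHat).1 (qden q)) = z.1 (qden q) + w.1 (qden q) := rfl
  unfold phi
  rw [hab, ← Circle.exp_add]
  exact val_add_exp (qden q) _ _ q (den_mul_eq_num q)

noncomputable def PsiHom : ZHat →+ (QModZ →+ Additive Circle) where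
  toFun := Psi
  map_zero' := Psi_zero
  map_add' := Psi_add

lemma int_eq_zero_of_real_bounds {m : ℤ} {c : ℝ} (hc : 0 < c)
    (h1 : (m : ℝ) * c < c) (h2 : -c < (m : ℝ) * c) : m = 0 := by
  have hm1 : (m : ℝ) < 1 := by nlinarith
  have hm2 : (-1 : ℝ) < m := by nlinarith
  have h1' : m < 1 := by exact_mod_cast hm1
  have h2' : (-1 : ℤ) < m := by exact_mod_cast hm2
  omega

lemma rep_unique {n : ℕ+} (a b : ZMod (n : ℕ))
    (h : Circle.exp (2 * π * ((a.val : ℝ) / ((n : ℕ) : ℝ))) =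
         Circle.exp (2 * π * ((b.val : ℝ) / ((n : ℕ) : ℝ)))) : a = b := by
  obtain ⟨m, hm⟩ := Circle.exp_eq_exp.1 h
  have hval : (a.val : ℝ) = (b.val : ℝ) + (m : ℝ) * ((n : ℕ) : ℝ) := by
    have hav := a.val_lt; have hbv := b.val_lt
    revert hm
    generalize (a.val : ℝ) = A
    generalize (b.val : ℝ) = B
    intro hm
    have hn0 : ((n : ℕ) : ℝ) ≠ 0 := by exact_mod_cast n.ne_zero
    have h2pi : (2 * π) ≠ 0 := by positivity
    field_simp at hm
    nlinarith [Real.pi_pos, sq_nonneg ((n:ℕ):ℝ)]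
  have hn0 : (0 : ℝ) < ((n : ℕ) : ℝ) := by exact_mod_cast n.pos
  have hav : (a.val : ℝ) < ((n : ℕ) : ℝ) := by exact_mod_cast a.val_lt
  have hbv : (b.val : ℝ) < ((n : ℕ) : ℝ) := by exact_mod_cast b.val_lt
  have hav0 : (0 : ℝ) ≤ (a.val : ℝ) := by positivity
  have hbv0 : (0 : ℝ) ≤ (b.val : ℝ) := by positivity
  have hm0 : m = 0 := int_eq_zero_of_real_bounds hn0 (by linarith) (by linarith)
  have hvv : (a.val : ℝ) = (b.val : ℝ) := by rw [hval, hm0]; push_cast; ring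
  exact ZMod.val_injective _ (by exact_mod_cast hvv)

lemma exists_rep (φ : QModZ →+ Additive Circle) (n : ℕ+) :
    ∃ a : ZMod (n : ℕ), Additive.toMul (φ (QuotientAddGroup.mk ((1 : ℚ) / ((n : ℕ) : ℚ))))
      = Circle.exp (2 * π * ((a.val : ℝ) / ((n : ℕ) : ℝ))) := by
  have hn0 : ((n : ℕ) : ℚ) ≠ 0 := by exact_mod_cast n.ne_zero
  have hone : (QuotientAddGroup.mk (1 : ℚ) : QModZ) = 0 := by
    refine (QuotientAddGroup.eq_zero_iff _).2 ?_
    exact ⟨1, by simp⟩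
  have hsmul : ((n : ℕ) • (QuotientAddGroup.mk ((1 : ℚ) / ((n : ℕ) : ℚ)) : QModZ))
      = QuotientAddGroup.mk (1 : ℚ) := by
    rw [← QuotientAddGroup.mk_nsmul]
    congr 1
    rw [nsmul_eq_mul]
    field_simp
  have h1 : (n : ℕ) • (φ (QuotientAddGroup.mk ((1 : ℚ) / ((n : ℕ) : ℚ)))) = 0 := by
    erw [← map_nsmul, hsmul, hone, map_zero]
  have hpow : (Additive.toMul (φ (QuotientAddGroup.mk ((1 : ℚ) / ((n : ℕ) : ℚ))))) ^ (n : ℕ) = 1 := by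
    rw [← toMul_nsmul, h1]
    rfl
  set c : Circle := Additive.toMul (φ (QuotientAddGroup.mk ((1 : ℚ) / ((n : ℕ) : ℚ)))) with hc
  set t : ℝ := Complex.arg (c : ℂ) with htdef
  have ht : Circle.exp t = c := Circle.exp_arg c
  have hnt : Circle.exp (((n : ℕ) : ℝ) * t) = 1 := by
    rw [← exp_npow, ht, hpow]
  obtain ⟨k, hk⟩ := Circle.exp_eq_one.1 hnt
  refine ⟨(k : ZMod (n : ℕ)), ?_⟩
  set a : ZMod (n : ℕ) := (k : ZMod (n : ℕ)) with hadef
  have hcast : ((a.val : ℤ) : ZMod (n : ℕ)) = ((k : ℤ) : ZMod (n : ℕ)) := by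
    push_cast
    rw [ZMod.natCast_val, ZMod.cast_id]
  obtain ⟨j, hj⟩ := ((ZMod.intCast_eq_intCast_iff _ _ _).1 hcast).symm.dvd
  have hjr : ((a.val : ℝ)) = (k : ℝ) + ((n : ℕ) : ℝ) * (j : ℝ) := by
    have := congrArg (fun x : ℤ => (x : ℝ)) hj
    push_cast at this
    linarith
  rw [← ht]
  refine (Circle.exp_eq_exp.2 ⟨j, ?_⟩).symm
  have hnR : ((n : ℕ) : ℝ) ≠ 0 := by exact_mod_cast n.ne_zero
  revert hjr hk
  generalize (a.val : ℝ) = A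
  intro hk hjr
  field_simp
  linear_combination (2 * π) * hjr - hk

lemma Psi_eq_zero {z : ZHat} (hz : Psi z = 0) : z = 0 := by
  have hn : ∀ n : ℕ+, z.1 n = 0 := by
    intro n
    have h1 := congrArg (fun ψ : QModZ →+ Additive Circle =>
      ψ (QuotientAddGroup.mk ((1 : ℚ) / ((n : ℕ) : ℚ)))) hz
    change Psi z (QuotientAddGroup.mk ((1 : ℚ) / ((n : ℕ) : ℚ))) = 0 at h1
    have h2 : ((1 : ℚ) / ((n : ℕ) : ℚ)) = (((1 : ℤ) : ℚ) / ((n : ℕ) : ℚ)) := by norm_num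
    rw [h2, Psi_mk, phi_div] at h1
    have h3 : Circle.exp (2 * π * (((z.1 n).val : ℝ) * (((1:ℤ) : ℝ) / ((n:ℕ) : ℝ)))) = 1 := h1
    obtain ⟨k, hk⟩ := Circle.exp_eq_one.1 h3
    have hval : ((z.1 n).val : ℝ) = (k : ℝ) * ((n : ℕ) : ℝ) := by
      revert hk
      generalize ((z.1 n).val : ℝ) = V
      intro hk
      have hn0 : ((n : ℕ) : ℝ) ≠ 0 := by exact_mod_cast n.ne_zero
      have h2pi : (0:ℝ) < 2 * π := by positivity
      field_simp at hk
      push_cast at hk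
      linarith
    have hn0 : (0 : ℝ) < ((n : ℕ) : ℝ) := by exact_mod_cast n.pos
    have hv1 : ((z.1 n).val : ℝ) < ((n : ℕ) : ℝ) := by exact_mod_cast (z.1 n).val_lt
    have hv0 : (0 : ℝ) ≤ ((z.1 n).val : ℝ) := by positivity
    have hk0 : k = 0 := int_eq_zero_of_real_bounds hn0 (by linarith) (by linarith)
    have : ((z.1 n).val : ℝ) = 0 := by rw [hval, hk0]; push_cast; ring
    exact ((z.1 n).val_eq_zero).1 (by exact_mod_cast this)
  exact Subtype.ext (funext fun n => hn n)

lemma Psi_surjective : Function.Surjective Psi := by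
  intro φ
  choose a hA using exists_rep φ
  have hcompat : ∀ (m n : ℕ+) (h : (m : ℕ) ∣ (n : ℕ)),
      ZMod.castHom h (ZMod (m : ℕ)) (a n) = a m := by
    intro m n h
    have hch : ZMod.castHom h (ZMod (m : ℕ)) (a n) = (((a n).val : ℕ) : ZMod (m : ℕ)) := by
      rw [ZMod.castHom_apply, ← ZMod.natCast_val]
    rw [hch]
    refine rep_unique _ _ ?_
    rw [← hA m]
    obtain ⟨cdiv, hcdiv⟩ := h
    have hc0 : cdiv ≠ 0 := by
      rintro rfl
      exact n.ne_zero (by simpa using hcdiv)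
    have hMQ : ((m : ℕ) : ℚ) ≠ 0 := by exact_mod_cast m.ne_zero
    have hcQ : ((cdiv : ℕ) : ℚ) ≠ 0 := by exact_mod_cast hc0
    have hq : ((1 : ℚ) / ((m : ℕ) : ℚ)) = (cdiv : ℕ) • ((1 : ℚ) / ((n : ℕ) : ℚ)) := by
      rw [nsmul_eq_mul, hcdiv]
      push_cast
      field_simp
    have hmk : (QuotientAddGroup.mk ((1 : ℚ) / ((m : ℕ) : ℚ)) : QModZ)
        = cdiv • QuotientAddGroup.mk ((1 : ℚ) / ((n : ℕ) : ℚ)) := by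
      rw [← QuotientAddGroup.mk_nsmul]
      congr 1
    have hφm : Additive.toMul (φ (QuotientAddGroup.mk ((1 : ℚ) / ((m : ℕ) : ℚ))))
        = Additive.toMul (φ (QuotientAddGroup.mk ((1 : ℚ) / ((n : ℕ) : ℚ)))) ^ cdiv := by
      erw [hmk, map_nsmul, toMul_nsmul]
    rw [hφm, hA n, exp_npow]
    -- now pure real computation
    set b : ZMod (m : ℕ) := (((a n).val : ℕ) : ZMod (m : ℕ)) with hbdef
    have hbcast : ((b.val : ℤ) : ZMod (m : ℕ)) = (((a n).val : ℤ) : ZMod (m : ℕ)) := by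
      push_cast
      rw [ZMod.natCast_val, ZMod.cast_id]
    obtain ⟨j, hj⟩ := ((ZMod.intCast_eq_intCast_iff _ _ _).1 hbcast).symm.dvd
    have hjr : ((b.val : ℝ)) = (((a n).val : ℕ) : ℝ) + ((m : ℕ) : ℝ) * (j : ℝ) := by
      have := congrArg (fun x : ℤ => (x : ℝ)) hj
      push_cast at this
      linarith
    have hNr : ((n : ℕ) : ℝ) = ((m : ℕ) : ℝ) * ((cdiv : ℕ) : ℝ) := by exact_mod_cast hcdiv
    have hrw : ((cdiv : ℕ) : ℝ) * (2 * π * ((((a n).val : ℕ) : ℝ) / ((n : ℕ) : ℝ)))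
        = 2 * π * ((((a n).val : ℕ) : ℝ) * ((cdiv : ℕ) : ℝ) / ((n : ℕ) : ℝ)) := by ring
    rw [hrw]
    refine exp_eq_of_sub_int j ?_
    revert hjr
    generalize ((b.val : ℕ) : ℝ) = B
    generalize (((a n).val : ℕ) : ℝ) = V
    intro hjr
    have hm0 : ((m : ℕ) : ℝ) ≠ 0 := by exact_mod_cast m.ne_zero
    have hc0R : ((cdiv : ℕ) : ℝ) ≠ 0 := by exact_mod_cast hc0
    rw [hjr, hNr]
    field_simp
    ring
  refine ⟨⟨a, hcompat⟩, ?_⟩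
  refine AddMonoidHom.ext (fun x => ?_)
  refine QuotientAddGroup.induction_on x (fun q => ?_)
  rw [Psi_mk]
  have hd0 : ((q.den : ℕ) : ℚ) ≠ 0 := by exact_mod_cast q.den_pos.ne'
  have hqrep : (QuotientAddGroup.mk q : QModZ)
      = q.num • QuotientAddGroup.mk ((1 : ℚ) / ((qden q : ℕ) : ℚ)) := by
    rw [← QuotientAddGroup.mk_zsmul]
    congr 1
    rw [zsmul_eq_mul, mul_one_div]
    exact (Rat.num_div_den q).symm
  erw [hqrep, map_zsmul]
  have hφd : φ (QuotientAddGroup.mk ((1 : ℚ) / ((qden q : ℕ) : ℚ)))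
      = Additive.ofMul (Circle.exp (2 * π * (((a (qden q)).val : ℝ) / ((qden q : ℕ) : ℝ)))) := by
    rw [← hA (qden q)]
    simp
  rw [hφd, ← ofMul_zpow]
  show Additive.ofMul (phi ⟨a, hcompat⟩ q) = _
  congr 1
  rw [exp_zpow]
  unfold phi
  have hzq : ((⟨a, hcompat⟩ : ZHat).1 (qden q)) = a (qden q) := rfl
  rw [hzq]
  have hd : ((qden q : ℕ) : ℝ) * (q : ℝ) = (q.num : ℝ) := den_mul_eq_num q
  congr 1
  revert hd
  generalize ((a (qden q)).val : ℝ) = V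
  generalize hQ : (q : ℝ) = Q
  intro hd
  have hdne : ((qden q : ℕ) : ℝ) ≠ 0 := by exact_mod_cast q.den_pos.ne'
  field_simp
  linear_combination V * hd

lemma zhat_isClosed : IsClosed ((ZHat : Subring (Π n : ℕ+, ZMod n)) : Set (Π n : ℕ+, ZMod n)) := by
  have hset : ((ZHat : Subring (Π n : ℕ+, ZMod n)) : Set (Π n : ℕ+, ZMod n))
      = ⋂ (m : ℕ+), ⋂ (n : ℕ+), ⋂ (h : (m : ℕ) ∣ (n : ℕ)),
          {f : Π n : ℕ+, ZMod n | ZMod.castHom h (ZMod (m : ℕ)) (f n) = f m} := by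
    ext f
    simp only [Set.mem_iInter, Set.mem_setOf_eq, SetLike.mem_coe]
    exact ⟨fun H m n h => H m n h, fun H m n h => H m n h⟩
  rw [hset]
  refine isClosed_iInter fun m => isClosed_iInter fun n => isClosed_iInter fun h => ?_
  exact isClosed_eq ((continuous_of_discreteTopology).comp (continuous_apply n))
    (continuous_apply m)

instance : CompactSpace ZHat := isCompact_iff_compactSpace.mp zhat_isClosed.isCompact

instance : T2Space (QModZ →+ Additive Circle) := by
  have hemb : Topology.IsEmbedding
      (fun φ : QModZ →+ Additive Circle => (φ : QModZ → Additive Circle)) :=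
    ⟨⟨rfl⟩, fun _ _ h => DFunLike.coe_injective h⟩
  exact hemb.t2Space

lemma Psi_continuous : Continuous (Psi : ZHat → (QModZ →+ Additive Circle)) := by
  rw [continuous_induced_rng]
  refine continuous_pi fun x => ?_
  obtain ⟨q, rfl⟩ := QuotientAddGroup.mk_surjective x
  show Continuous fun z : ZHat => Psi z (QuotientAddGroup.mk q)
  have heq : (fun z : ZHat => Psi z (QuotientAddGroup.mk q))
      = (fun A : ZMod ((qden q : ℕ)) =>
          Additive.ofMul (Circle.exp (2 * π * ((A.val : ℝ) * (q : ℝ)))))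
        ∘ (fun z : ZHat => z.1 (qden q)) := by
    funext z
    rfl
  rw [heq]
  exact (continuous_of_discreteTopology).comp ((continuous_apply _).comp continuous_subtype_val)

/-- The Pontryagin dual of `ℚ/ℤ` is isomorphic as a topological
group to `Ẑ`, via the map sending `z ∈ Ẑ` to the character
`[m/n] ↦ exp(2πi · z(n) · m/n)`. -/
theorem dual_QModZ_iso_ZHat :
    ∃ e : ZHat ≃+ (QModZ →+ Additive Circle),
      Continuous e ∧ Continuous e.symm ∧
      ∀ (z : ZHat) (m : ℤ) (n : ℕ+),
        e z (QuotientAddGroup.mk ((m : ℚ) / (n : ℚ)) : QModZ) =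
          Additive.ofMul (Circle.exp
            (2 * π * (((z.1 n).val : ℝ) * ((m : ℝ) / (n : ℝ))))) := by
  have hbij : Function.Bijective (PsiHom : ZHat →+ (QModZ →+ Additive Circle)) :=
    ⟨(injective_iff_map_eq_zero PsiHom).2 (fun z hz => Psi_eq_zero hz), Psi_surjective⟩
  refine ⟨AddEquiv.ofBijective PsiHom hbij, ?_, ?_, ?_⟩
  · exact Psi_continuous
  · have hce : Continuous (AddEquiv.ofBijective PsiHom hbij).toEquiv := Psi_continuous
    exact (hce.homeoOfEquivCompactToT2).symm.continuous
  · intro z m n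
    show Psi z (QuotientAddGroup.mk ((m : ℚ) / (n : ℚ))) = _
    rw [Psi_mk, phi_div]
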